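/- arXiv:2605.02426 — 4 statements merged into one kernel-verified Lean document; each statement's English description precedes it below -/
import Mathlib

section
/- For every positive integer n, ∑_{a > 1, gcd(a,n) = 1} μ(a)/φ(a²) = P(n) − 1, where P(n) = ∏_{p prime, p ∤ n} (1 − 1/(p(p−1))). -/
open ArithmeticFunction
open scoped ArithmeticFunction.Moebius

lemma aux_sf_le (a : ℕ) (ha : Squarefree a) : a ≤ 2 * (Nat.totient a) ^ 2 := by
  have ha0 : a ≠ 0 := ha.ne_zero
  have hprod : ∏ p ∈ a.primeFactors, p = a := Nat.prod_primeFactors_of_squarefree ha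
  have htot : Nat.totient a = ∏ p ∈ a.primeFactors, (p - 1) := by
    rw [Nat.totient_eq_div_primeFactors_mul, hprod, Nat.div_self (Nat.pos_of_ne_zero ha0), one_mul]
  have htot2 : (Nat.totient a) ^ 2 = ∏ p ∈ a.primeFactors, (p - 1) ^ 2 := by
    rw [htot, ← Finset.prod_pow]
  have key : ∀ p ∈ a.primeFactors, p ≠ 2 → p ≤ (p - 1) ^ 2 := by
    intro p hp hp2
    have hpp : p.Prime := Nat.prime_of_mem_primeFactors hp
    have h3 : 3 ≤ p := by
      rcases hpp.two_le.lt_or_eq with h | h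
      · omega
      · omega
    have h1 : 2 * (p - 1) ≤ (p - 1) ^ 2 := by
      rw [sq]; exact Nat.mul_le_mul_right _ (by omega)
    omega
  by_cases hm : 2 ∈ a.primeFactors
  · calc a = ∏ p ∈ a.primeFactors, p := hprod.symm
      _ = 2 * ∏ p ∈ a.primeFactors.erase 2, p :=
          (Finset.mul_prod_erase _ (fun p => p) hm).symm
      _ ≤ 2 * ∏ p ∈ a.primeFactors.erase 2, (p - 1) ^ 2 := by
          refine Nat.mul_le_mul_left _ (Finset.prod_le_prod' ?_)
          intro p hp
          exact key p (Finset.mem_of_mem_erase hp) (Finset.ne_of_mem_erase hp)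
      _ = 2 * (Nat.totient a) ^ 2 := by
          rw [htot2, ← Finset.mul_prod_erase _ _ hm]
          norm_num
  · calc a = ∏ p ∈ a.primeFactors, p := hprod.symm
      _ ≤ ∏ p ∈ a.primeFactors, (p - 1) ^ 2 := by
          refine Finset.prod_le_prod' ?_
          intro p hp
          exact key p hp (fun h => hm (h ▸ hp))
      _ ≤ 2 * (Nat.totient a) ^ 2 := by rw [htot2]; omega

set_option maxHeartbeats 1000000 in
theorem stmt_5 (n : ℕ) (hn : 0 < n) :
    (∑' a : ℕ, if 1 < a ∧ Nat.gcd a n = 1 then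
        (μ a : ℝ) / (Nat.totient (a ^ 2) : ℝ) else 0)
      = (∏' p : {p : ℕ // p.Prime ∧ ¬ p ∣ n},
          (1 - 1 / ((p : ℝ) * ((p : ℝ) - 1)))) - 1 := by
  set f : ℕ → ℝ := fun a => if Nat.gcd a n = 1 then
      (μ a : ℝ) / (Nat.totient (a ^ 2) : ℝ) else 0 with hfdef
  have hf1 : f 1 = 1 := by simp [hfdef]
  have hf0 : f 0 = 0 := by simp [hfdef]
  have hmul : ∀ {m k : ℕ}, Nat.Coprime m k → f (m * k) = f m * f k := by
    intro m k hmk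
    simp only [hfdef]
    by_cases hm : Nat.gcd m n = 1 <;> by_cases hk : Nat.gcd k n = 1
    · rw [if_pos hm, if_pos hk, if_pos (Nat.Coprime.mul hm hk)]
      rw [isMultiplicative_moebius.map_mul_of_coprime hmk]
      rw [mul_pow, Nat.totient_mul (Nat.Coprime.pow 2 2 hmk)]
      push_cast
      ring
    · rw [if_pos hm, if_neg hk, if_neg (fun h => hk ((Nat.coprime_mul_iff_left.mp h).2)), mul_zero]
    · rw [if_neg hm, if_neg (fun h => hm ((Nat.coprime_mul_iff_left.mp h).1)), zero_mul]
    · rw [if_neg hm, if_neg (fun h => hm ((Nat.coprime_mul_iff_left.mp h).1)), zero_mul]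
  -- totient of a square, for squarefree a not needed: general a > 0
  have htotsq : ∀ a : ℕ, 0 < a → Nat.totient (a ^ 2) = Nat.totient a * a := by
    intro a ha
    have h := Nat.totient_gcd_mul_totient_mul a a
    rw [Nat.gcd_self] at h
    have hφ : 0 < Nat.totient a := Nat.totient_pos.mpr ha
    have : Nat.totient a * Nat.totient (a * a) = Nat.totient a * (Nat.totient a * a) := by
      rw [h]; ring
    rw [sq]
    exact Nat.eq_of_mul_eq_mul_left hφ this
  have hsum : Summable (fun a => ‖f a‖) := by
    have hS : Summable (fun a : ℕ => Real.sqrt 2 * (1 / ((a : ℝ) * Real.sqrt a))) := by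
      apply Summable.mul_left
      have h := (Real.summable_one_div_nat_rpow (p := 3/2)).mpr (by norm_num)
      refine h.congr fun a => ?_
      rcases Nat.eq_zero_or_pos a with rfl | ha
      · rw [Nat.cast_zero, Real.zero_rpow (by norm_num), Real.sqrt_zero, mul_zero]
      · have ha' : (0:ℝ) < a := by exact_mod_cast ha
        rw [show (3/2 : ℝ) = 1 + 1/2 by norm_num, Real.rpow_add ha', Real.rpow_one,
          ← Real.sqrt_eq_rpow]
    refine Summable.of_nonneg_of_le (fun a => norm_nonneg _) (fun a => ?_) hS
    by_cases hfa : f a = 0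
    · rw [hfa, norm_zero]
      positivity
    have hcop : Nat.gcd a n = 1 := by
      by_contra h
      exact hfa (by simp [hfdef, h])
    have hμ : μ a ≠ 0 := by
      intro h
      exact hfa (by simp [hfdef, h])
    have hsf : Squarefree a := moebius_ne_zero_iff_squarefree.mp hμ
    have ha0 : 0 < a := Nat.pos_of_ne_zero hsf.ne_zero
    have hφpos : 0 < Nat.totient a := Nat.totient_pos.mpr ha0
    have hφsq : Nat.totient (a ^ 2) = Nat.totient a * a := htotsq a ha0
    have hnorm : ‖f a‖ = 1 / ((Nat.totient a : ℝ) * a) := by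
      rw [hfdef]
      simp only [if_pos hcop]
      rw [Real.norm_eq_abs, abs_div, abs_of_nonneg (by positivity : (0:ℝ) ≤ (Nat.totient (a^2) : ℝ))]
      rw [show |(μ a : ℝ)| = 1 by
        rw [← Int.cast_abs, abs_moebius_eq_one_of_squarefree hsf, Int.cast_one]]
      rw [hφsq]
      push_cast
      ring_nf
    rw [hnorm]
    have hkey : Real.sqrt a ≤ Real.sqrt 2 * Nat.totient a := by
      have h1 : (a : ℝ) ≤ 2 * (Nat.totient a : ℝ) ^ 2 := by
        exact_mod_cast aux_sf_le a hsf
      calc Real.sqrt a ≤ Real.sqrt (2 * (Nat.totient a : ℝ) ^ 2) := Real.sqrt_le_sqrt h1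
        _ = Real.sqrt 2 * Nat.totient a := by
            rw [Real.sqrt_mul (by norm_num), Real.sqrt_sq (by positivity)]
    have hapos : (0:ℝ) < a := by exact_mod_cast ha0
    have hφpos' : (0:ℝ) < (Nat.totient a : ℝ) := by exact_mod_cast hφpos
    have hsa : (0:ℝ) < Real.sqrt a := Real.sqrt_pos.mpr hapos
    rw [mul_one_div, div_le_div_iff₀ (by positivity) (by positivity), one_mul]
    calc (a:ℝ) * Real.sqrt a ≤ (a:ℝ) * (Real.sqrt 2 * Nat.totient a) := by
          exact mul_le_mul_of_nonneg_left hkey (le_of_lt hapos)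
      _ = Real.sqrt 2 * ((Nat.totient a : ℝ) * a) := by ring
  have hEP := EulerProduct.eulerProduct_hasProd hf1 hmul hsum hf0
  -- local factors
  have hfac : ∀ p : Nat.Primes, (∑' e : ℕ, f ((p : ℕ) ^ e))
      = if (p : ℕ) ∣ n then 1 else 1 - 1 / (((p : ℕ) : ℝ) * (((p : ℕ) : ℝ) - 1)) := by
    intro p
    obtain ⟨p, hp⟩ := p
    have hvanish : ∀ e : ℕ, e ∉ ({0, 1} : Finset ℕ) → f (p ^ e) = 0 := by
      intro e he
      simp only [Finset.mem_insert, Finset.mem_singleton] at he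
      push_neg at he
      have hμ0 : μ (p ^ e) = 0 := by
        rw [moebius_apply_prime_pow hp he.1, if_neg he.2]
      simp [hfdef, hμ0]
    rw [tsum_eq_sum hvanish]
    rw [Finset.sum_pair (by norm_num : (0:ℕ) ≠ 1)]
    rw [pow_zero, pow_one, hf1]
    by_cases hpn : p ∣ n
    · have hg : ¬ Nat.gcd p n = 1 := by
        rw [show (Nat.gcd p n = 1) = Nat.Coprime p n from rfl, hp.coprime_iff_not_dvd]
        simpa using hpn
      simp only [hfdef, if_neg hg, if_pos hpn, add_zero]
    · have hg : Nat.gcd p n = 1 := (hp.coprime_iff_not_dvd).mpr hpn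
      simp only [hfdef, if_pos hg, if_neg hpn]
      rw [moebius_apply_prime hp, Nat.totient_prime_pow hp (by norm_num : 0 < 2)]
      have h2 : ((p ^ (2-1) * (p - 1) : ℕ) : ℝ) = (p : ℝ) * ((p : ℝ) - 1) := by
        have : 1 ≤ p := hp.one_le
        push_cast [Nat.cast_sub this]
        ring
      rw [h2]
      push_cast
      ring
  -- convert to the product over the subtype
  set G : ℕ → ℝ := fun p => if p.Prime ∧ ¬ p ∣ n then 1 - 1 / ((p:ℝ) * ((p:ℝ) - 1)) else 1
    with hGdef
  have hEP2 : HasProd (fun p : Nat.Primes => G (p : ℕ)) (∑' m, f m) := by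
    have heq : (fun p : Nat.Primes => ∑' e : ℕ, f ((p : ℕ) ^ e))
        = fun p : Nat.Primes => G (p : ℕ) := by
      funext p
      rw [hfac p]
      by_cases h : (p : ℕ) ∣ n
      · simp [hGdef, h]
      · simp [hGdef, h, p.prop]
    exact heq ▸ hEP
  have h1 : HasProd ({p : ℕ | Nat.Prime p}.mulIndicator G) (∑' m, f m) := by
    rw [← hasProd_subtype_iff_mulIndicator]
    exact hEP2
  have h2 : ({p : ℕ | Nat.Prime p}.mulIndicator G)
      = ({p : ℕ | p.Prime ∧ ¬ p ∣ n}.mulIndicator G) := by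
    funext p
    by_cases hp : p.Prime
    · by_cases hd : p ∣ n
      · have hG1 : G p = 1 := by simp [hGdef, hd]
        simp [Set.mulIndicator_apply, hp, hd, hG1]
      · simp [Set.mulIndicator_apply, hp, hd]
    · simp [Set.mulIndicator_apply, hp]
  rw [h2] at h1
  have h3 : HasProd (fun q : {p : ℕ // p.Prime ∧ ¬ p ∣ n} => G (q : ℕ)) (∑' m, f m) :=
    hasProd_subtype_iff_mulIndicator.mpr h1
  have h4 : (∏' p : {p : ℕ // p.Prime ∧ ¬ p ∣ n}, (1 - 1 / ((p : ℝ) * ((p : ℝ) - 1))))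
      = ∑' m, f m := by
    rw [← h3.tprod_eq]
    refine tprod_congr fun q => ?_
    simp only [hGdef]
    rw [if_pos q.prop]
  have hsummand : (fun a : ℕ => if 1 < a ∧ Nat.gcd a n = 1 then
      (μ a : ℝ) / (Nat.totient (a ^ 2) : ℝ) else 0)
      = fun a => f a - (if a = 1 then (1:ℝ) else 0) := by
    funext a
    match a with
    | 0 => simpa using hf0.symm
    | 1 => simp [hf1]
    | (a + 2) =>
      have h2a : 1 < a + 2 := by omega
      have hne : a + 2 ≠ 1 := by omega
      by_cases hg : Nat.gcd (a + 2) n = 1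
      · simp [hfdef, h2a, hg, hne]
      · simp [hfdef, h2a, hg, hne]
  rw [hsummand, Summable.tsum_sub hsum.of_norm (hasSum_ite_eq 1 (1:ℝ)).summable,
    (hasSum_ite_eq 1 (1:ℝ)).tsum_eq, h4]
end

section
/- For every positive integer n, ∏_{p prime, p ∤ n} (1 − 1/(p(p−1))) ≤ C_Artin · ∏_{p ≤ q_{ω(n)}} (1 + 1/(p² − p − 1)), where C_Artin = ∏_{p prime} (1 − 1/(p(p−1))) is Artin's constant, ω(n) is the number of distinct prime factors of n, and q_i is the i-th prime. -/
open Real Finset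

namespace Stmt7Aux

noncomputable def g (p : ℕ) : ℝ := 1 - 1 / ((p : ℝ) * ((p : ℝ) - 1))

lemma denom_ge {p : ℕ} (hp : 2 ≤ p) : (2:ℝ) ≤ (p:ℝ) * ((p:ℝ) - 1) := by
  have h : (2:ℝ) ≤ (p:ℝ) := by exact_mod_cast hp
  nlinarith

lemma g_ge {p : ℕ} (hp : 2 ≤ p) : (1:ℝ)/2 ≤ g p := by
  have h := denom_ge hp
  have h0 : (0:ℝ) < (p:ℝ) * ((p:ℝ) - 1) := by linarith
  have h1 : 1 / ((p:ℝ) * ((p:ℝ) - 1)) ≤ 1/2 := by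
    apply one_div_le_one_div_of_le <;> linarith
  unfold g; linarith

lemma g_pos {p : ℕ} (hp : 2 ≤ p) : 0 < g p :=
  lt_of_lt_of_le (by norm_num) (g_ge hp)

lemma g_le_one {p : ℕ} (hp : 2 ≤ p) : g p ≤ 1 := by
  have h := denom_ge hp
  have h1 : 0 ≤ 1 / ((p:ℝ) * ((p:ℝ) - 1)) := by positivity
  unfold g; linarith

lemma g_mono {a b : ℕ} (ha : 2 ≤ a) (hab : a ≤ b) : g a ≤ g b := by
  have ha' : (2:ℝ) ≤ (a:ℝ) := by exact_mod_cast ha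
  have hab' : (a:ℝ) ≤ (b:ℝ) := by exact_mod_cast hab
  have h1 : (0:ℝ) < (a:ℝ) * ((a:ℝ)-1) := by nlinarith
  have h2 : (a:ℝ)*((a:ℝ)-1) ≤ (b:ℝ)*((b:ℝ)-1) := by nlinarith
  have h3 := one_div_le_one_div_of_le h1 h2
  unfold g; linarith

lemma summable_neg_log : Summable (fun p : Nat.Primes => -Real.log (g (p:ℕ))) := by
  have hbase : Summable (fun p : Nat.Primes => 4 * ((p:ℕ):ℝ) ^ (-2:ℝ)) :=
    (Nat.Primes.summable_rpow.mpr (by norm_num)).mul_left 4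
  refine hbase.of_nonneg_of_le (fun p => ?_) (fun p => ?_)
  · have h2 : 2 ≤ (p:ℕ) := p.2.two_le
    have := Real.log_nonpos (le_of_lt (g_pos h2)) (g_le_one h2)
    linarith
  · have h2 : 2 ≤ (p:ℕ) := p.2.two_le
    have hx2 : (2:ℝ) ≤ ((p:ℕ):ℝ) := by exact_mod_cast h2
    set x : ℝ := 1 / (((p:ℕ):ℝ) * (((p:ℕ):ℝ) - 1)) with hxdef
    have hd : (2:ℝ) ≤ ((p:ℕ):ℝ) * (((p:ℕ):ℝ) - 1) := denom_ge h2
    have hd0 : (0:ℝ) < ((p:ℕ):ℝ) * (((p:ℕ):ℝ) - 1) := by linarith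
    have hx0 : 0 < x := by positivity
    have hxhalf : x ≤ 1/2 := by
      rw [hxdef]; apply one_div_le_one_div_of_le <;> linarith
    have hgx : g (p:ℕ) = 1 - x := rfl
    have h1x : (0:ℝ) < 1 - x := by linarith
    -- -log(1-x) ≤ 2x
    have hlog : -Real.log (1 - x) ≤ 2 * x := by
      have h := Real.log_le_sub_one_of_pos (x := (1-x)⁻¹) (by positivity)
      rw [Real.log_inv] at h
      have hinv1 : (1-x) * (1-x)⁻¹ = 1 := mul_inv_cancel₀ h1x.ne'
      have hnn : (0:ℝ) ≤ x * (1 - 2*x) := mul_nonneg hx0.le (by linarith)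
      have hinvpos : (0:ℝ) < (1-x)⁻¹ := by positivity
      nlinarith
    -- 2x ≤ 4 p^(-2)
    have hrp : ((p:ℕ):ℝ) ^ (-2:ℝ) = 1 / ((p:ℕ):ℝ)^2 := by
      rw [Real.rpow_neg (by positivity), ← Real.rpow_natCast ((p:ℕ):ℝ) 2]
      norm_num
    have hps : (0:ℝ) < ((p:ℕ):ℝ)^2 := by positivity
    have hcompare : 2 * x ≤ 4 * (1 / ((p:ℕ):ℝ)^2) := by
      rw [hxdef, mul_one_div, mul_one_div, div_le_div_iff₀ hd0 hps]
      nlinarith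
    rw [hgx, hrp]
    linarith

lemma summable_log : Summable (fun p : Nat.Primes => Real.log (g (p:ℕ))) := by
  simpa using summable_neg_log.neg

lemma tprod_eq_exp {ι : Type*} (f : ι → ℝ) (hf : ∀ i, 0 < f i)
    (hs : Summable (fun i => Real.log (f i))) :
    ∏' i, f i = Real.exp (∑' i, Real.log (f i)) := by
  have h := hs.hasSum.rexp
  have he : (Real.exp ∘ fun i => Real.log (f i)) = f := funext fun i => Real.exp_log (hf i)
  rw [he] at h
  exact h.tprod_eq

lemma inv_g_eq {q : ℕ} (hq : 2 ≤ q) :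
    1 + 1 / ((q:ℝ)^2 - (q:ℝ) - 1) = (g q)⁻¹ := by
  have hx : (2:ℝ) ≤ (q:ℝ) := by exact_mod_cast hq
  have h1 : (0:ℝ) < (q:ℝ)^2 - (q:ℝ) - 1 := by nlinarith
  have h2 : (0:ℝ) < (q:ℝ) * ((q:ℝ) - 1) := by nlinarith
  have hg0 : g q ≠ 0 := (g_pos hq).ne'
  unfold g at hg0 ⊢
  rw [inv_eq_one_div, eq_div_iff hg0]
  have h3 : (q:ℝ)^2 - (q:ℝ) - 1 ≠ 0 := h1.ne'
  have h4 : (q:ℝ) - 1 ≠ 0 := by linarith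
  have h5 : (q:ℝ) ≠ 0 := by linarith
  rw [one_add_div h3, one_sub_div h2.ne', div_mul_div_comm, div_eq_iff (mul_ne_zero h3 h2.ne'), one_mul]
  ring

/-- key combinatorial fact: the i-th smallest element of a finset of primes is at least
the i-th prime. -/
lemma nth_le_orderIso {s : Finset ℕ} (hs : ∀ p ∈ s, p.Prime) {k : ℕ} (h : s.card = k)
    (i : Fin k) : Nat.nth Nat.Prime i ≤ ((s.orderIsoOfFin h i : ℕ)) := by
  set e := s.orderIsoOfFin h with he
  have hik : ∀ j : ℕ, min j (i:ℕ) < k := fun j =>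
    lt_of_le_of_lt (min_le_right _ _) i.isLt
  set f : ℕ → ℕ := fun j => ((e ⟨min j (i:ℕ), hik j⟩ : s) : ℕ) with hf
  have hmem : ∀ j ∈ Finset.range ((i:ℕ)+1),
      f j ∈ (Finset.range ((e i : ℕ) + 1)).filter Nat.Prime := by
    intro j hj
    simp only [Finset.mem_range] at hj
    have hji : j ≤ (i:ℕ) := Nat.lt_succ_iff.mp hj
    have hle : (⟨min j (i:ℕ), hik j⟩ : Fin k) ≤ i := by
      simp [Fin.le_def]
    have hmono : (e ⟨min j (i:ℕ), hik j⟩ : s) ≤ e i := e.monotone hle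
    have hle' : f j ≤ (e i : ℕ) := Subtype.coe_le_coe.mpr hmono
    have hprime : (f j).Prime := hs _ (e ⟨min j (i:ℕ), hik j⟩).2
    simp only [Finset.mem_filter, Finset.mem_range]
    exact ⟨Nat.lt_succ_iff.mpr hle', hprime⟩
  have hinj : Set.InjOn f (Finset.range ((i:ℕ)+1)) := by
    intro j1 hj1 j2 hj2 heq
    simp only [Finset.coe_range, Set.mem_Iio] at hj1 hj2
    have hj1' : j1 ≤ (i:ℕ) := Nat.lt_succ_iff.mp hj1
    have hj2' : j2 ≤ (i:ℕ) := Nat.lt_succ_iff.mp hj2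
    have heq' : (e ⟨min j1 (i:ℕ), hik j1⟩ : s) = e ⟨min j2 (i:ℕ), hik j2⟩ :=
      Subtype.coe_injective heq
    have h2 := e.injective heq'
    have h3 : min j1 (i:ℕ) = min j2 (i:ℕ) := by
      simpa using congrArg Fin.val h2
    omega
  have hcard := Finset.card_le_card_of_injOn f hmem hinj
  simp only [Finset.card_range] at hcard
  have hcount : (i : ℕ) < Nat.count Nat.Prime ((e i : ℕ) + 1) := by
    rw [Nat.count_eq_card_filter_range]
    have hrfl : (Finset.range ((e i : ℕ) + 1)).filter (fun x => Nat.Prime x)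
        = (Finset.range ((e i : ℕ) + 1)).filter Nat.Prime := rfl
    rw [hrfl]
    omega
  have := Nat.nth_lt_of_lt_count hcount
  omega

end Stmt7Aux

theorem stmt_7 (n : ℕ) (hn : 0 < n) :
    (∏' p : {p : ℕ // p.Prime ∧ ¬ p ∣ n},
        (1 - 1 / ((p : ℝ) * ((p : ℝ) - 1))))
      ≤ (∏' p : Nat.Primes, (1 - 1 / ((p : ℝ) * ((p : ℝ) - 1)))) *
        ∏ i ∈ Finset.range n.primeFactors.card,
          (1 + 1 / ((Nat.nth Nat.Prime i : ℝ) ^ 2 - (Nat.nth Nat.Prime i : ℝ) - 1)) := by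
  classical
  open Stmt7Aux in
  set k := n.primeFactors.card with hk
  have hsum := Stmt7Aux.summable_log
  set F : Nat.Primes → ℝ := fun p => Real.log (Stmt7Aux.g (p:ℕ)) with hF
  set s : Set Nat.Primes := {p | (p:ℕ) ∣ n} with hs
  have hsplit := hsum.tsum_subtype_add_tsum_subtype_compl s
  -- equivalences
  let e2 : {p : ℕ // p.Prime ∧ ¬ p ∣ n} ≃ ↥sᶜ :=
  { toFun := fun q => ⟨⟨q.1, q.2.1⟩, q.2.2⟩
    invFun := fun x => ⟨((x : Nat.Primes) : ℕ), (x : Nat.Primes).2, x.2⟩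
    left_inv := fun _ => rfl
    right_inv := fun _ => rfl }
  let e1 : ↥s ≃ {x : ℕ // x ∈ n.primeFactors} :=
  { toFun := fun x => ⟨((x : Nat.Primes) : ℕ),
      Nat.mem_primeFactors.mpr ⟨(x : Nat.Primes).2, x.2, hn.ne'⟩⟩
    invFun := fun q => ⟨⟨q.1, Nat.prime_of_mem_primeFactors q.2⟩,
      Nat.dvd_of_mem_primeFactors q.2⟩
    left_inv := fun _ => rfl
    right_inv := fun _ => rfl }
  -- summability over the complement subtype
  have hsumc : Summable (fun x : ↥sᶜ => F (x : Nat.Primes)) := hsum.subtype sᶜ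
  have hsub : Summable (fun q : {p : ℕ // p.Prime ∧ ¬ p ∣ n} =>
      Real.log (Stmt7Aux.g (q : ℕ))) :=
    (e2.summable_iff (f := fun x : ↥sᶜ => F (x : Nat.Primes))).mpr hsumc
  -- rewrite the two tprods as exponentials
  have hL : (∏' p : {p : ℕ // p.Prime ∧ ¬ p ∣ n},
      (1 - 1 / ((p : ℝ) * ((p : ℝ) - 1))))
      = Real.exp (∑' q : {p : ℕ // p.Prime ∧ ¬ p ∣ n}, Real.log (Stmt7Aux.g (q : ℕ))) := by
    rw [← Stmt7Aux.tprod_eq_exp _ (fun q => Stmt7Aux.g_pos q.2.1.two_le) hsub]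
    exact tprod_congr fun q => rfl
  have hC : (∏' p : Nat.Primes, (1 - 1 / ((p : ℝ) * ((p : ℝ) - 1))))
      = Real.exp (∑' p : Nat.Primes, F p) := by
    rw [← Stmt7Aux.tprod_eq_exp _ (fun p : Nat.Primes => Stmt7Aux.g_pos p.2.two_le) hsum]
    exact tprod_congr fun p => rfl
  -- the tsum over the complement equals the tsum over the given subtype
  have hScEq : (∑' q : {p : ℕ // p.Prime ∧ ¬ p ∣ n}, Real.log (Stmt7Aux.g (q : ℕ)))
      = ∑' x : ↥sᶜ, F (x : Nat.Primes) :=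
    e2.tsum_eq (f := fun x : ↥sᶜ => F (x : Nat.Primes))
  -- the tsum over s equals the finite sum over primeFactors
  have hSd : (∑' x : ↥s, F (x : Nat.Primes))
      = ∑ p ∈ n.primeFactors, Real.log (Stmt7Aux.g p) := by
    rw [← e1.symm.tsum_eq (f := fun x : ↥s => F (x : Nat.Primes)), tsum_fintype,
      ← Finset.sum_coe_sort n.primeFactors (fun p => Real.log (Stmt7Aux.g p))]
    exact Finset.sum_congr rfl fun q _ => rfl
  -- rewrite the finite product on the RHS
  have h2le : ∀ i : ℕ, 2 ≤ Nat.nth Nat.Prime i := fun i => (Nat.prime_nth_prime i).two_le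
  have hR : (∏ i ∈ Finset.range k,
        (1 + 1 / ((Nat.nth Nat.Prime i : ℝ) ^ 2 - (Nat.nth Nat.Prime i : ℝ) - 1)))
      = Real.exp (- ∑ i ∈ Finset.range k, Real.log (Stmt7Aux.g (Nat.nth Nat.Prime i))) := by
    rw [← Finset.sum_neg_distrib, Real.exp_sum]
    refine Finset.prod_congr rfl fun i _ => ?_
    rw [Stmt7Aux.inv_g_eq (h2le i), Real.exp_neg, Real.exp_log (Stmt7Aux.g_pos (h2le i))]
  -- key comparison of finite sums
  have hT : (∑ i ∈ Finset.range k, Real.log (Stmt7Aux.g (Nat.nth Nat.Prime i)))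
      ≤ ∑ p ∈ n.primeFactors, Real.log (Stmt7Aux.g p) := by
    rw [Finset.sum_range (fun i => Real.log (Stmt7Aux.g (Nat.nth Nat.Prime i))),
      ← Finset.sum_coe_sort n.primeFactors (fun p => Real.log (Stmt7Aux.g p)),
      ← Equiv.sum_comp (n.primeFactors.orderIsoOfFin hk.symm).toEquiv
        (fun x : ↥(n.primeFactors : Finset ℕ) => Real.log (Stmt7Aux.g (x : ℕ)))]
    apply Finset.sum_le_sum
    intro i _
    have hle := Stmt7Aux.nth_le_orderIso
      (fun p hp => Nat.prime_of_mem_primeFactors hp) hk.symm i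
    exact Real.log_le_log (Stmt7Aux.g_pos (h2le i)) (Stmt7Aux.g_mono (h2le i) hle)
  -- put everything together
  rw [hL, hC, hR, hScEq, ← Real.exp_add]
  apply Real.exp_le_exp.mpr
  rw [hSd] at hsplit
  linarith
end

section
/- If n ≥ 3, then ω(n) ≤ 1.3841·log n / log log n, where ω(n) is the number of distinct prime factors of n. -/
open Real Finset

theorem prv0 : Nat.nth Nat.Prime 0 = 2 := by
  have h : Nat.count Nat.Prime 2 = 0 := by decide
  exact h ▸ Nat.nth_count (by norm_num)

theorem prv1 : Nat.nth Nat.Prime 1 = 3 := by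
  have h : Nat.count Nat.Prime 3 = 1 := by decide
  exact h ▸ Nat.nth_count (by norm_num)

theorem prv2 : Nat.nth Nat.Prime 2 = 5 := by
  have h : Nat.count Nat.Prime 5 = 2 := by decide
  exact h ▸ Nat.nth_count (by norm_num)

theorem prv3 : Nat.nth Nat.Prime 3 = 7 := by
  have h : Nat.count Nat.Prime 7 = 3 := by decide
  exact h ▸ Nat.nth_count (by norm_num)

theorem prv4 : Nat.nth Nat.Prime 4 = 11 := by
  have h : Nat.count Nat.Prime 11 = 4 := by decide
  exact h ▸ Nat.nth_count (by norm_num)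

theorem prv5 : Nat.nth Nat.Prime 5 = 13 := by
  have h : Nat.count Nat.Prime 13 = 5 := by decide
  exact h ▸ Nat.nth_count (by norm_num)

theorem prv6 : Nat.nth Nat.Prime 6 = 17 := by
  have h : Nat.count Nat.Prime 17 = 6 := by decide
  exact h ▸ Nat.nth_count (by norm_num)

theorem prv7 : Nat.nth Nat.Prime 7 = 19 := by
  have h : Nat.count Nat.Prime 19 = 7 := by decide
  exact h ▸ Nat.nth_count (by norm_num)

theorem prv8 : Nat.nth Nat.Prime 8 = 23 := by
  have h : Nat.count Nat.Prime 23 = 8 := by decide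
  exact h ▸ Nat.nth_count (by norm_num)

theorem prv9 : Nat.nth Nat.Prime 9 = 29 := by
  have h : Nat.count Nat.Prime 29 = 9 := by decide
  exact h ▸ Nat.nth_count (by norm_num)

theorem prv10 : Nat.nth Nat.Prime 10 = 31 := by
  have h : Nat.count Nat.Prime 31 = 10 := by decide
  exact h ▸ Nat.nth_count (by norm_num)

theorem prv11 : Nat.nth Nat.Prime 11 = 37 := by
  have h : Nat.count Nat.Prime 37 = 11 := by decide
  exact h ▸ Nat.nth_count (by norm_num)

theorem prv12 : Nat.nth Nat.Prime 12 = 41 := by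
  have h : Nat.count Nat.Prime 41 = 12 := by decide
  exact h ▸ Nat.nth_count (by norm_num)

theorem prv13 : Nat.nth Nat.Prime 13 = 43 := by
  have h : Nat.count Nat.Prime 43 = 13 := by decide
  exact h ▸ Nat.nth_count (by norm_num)

theorem prv14 : Nat.nth Nat.Prime 14 = 47 := by
  have h : Nat.count Nat.Prime 47 = 14 := by decide
  exact h ▸ Nat.nth_count (by norm_num)

theorem prv15 : Nat.nth Nat.Prime 15 = 53 := by
  have h : Nat.count Nat.Prime 53 = 15 := by decide
  exact h ▸ Nat.nth_count (by norm_num)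

theorem hprodv4 : (∏ j ∈ Finset.range 4, Nat.nth Nat.Prime j) = 210 := by
  norm_num [Finset.prod_range_succ, prv0, prv1, prv2, prv3, prv4, prv5, prv6, prv7, prv8, prv9, prv10, prv11, prv12, prv13, prv14, prv15]

theorem hprodv5 : (∏ j ∈ Finset.range 5, Nat.nth Nat.Prime j) = 2310 := by
  norm_num [Finset.prod_range_succ, prv0, prv1, prv2, prv3, prv4, prv5, prv6, prv7, prv8, prv9, prv10, prv11, prv12, prv13, prv14, prv15]

theorem hprodv6 : (∏ j ∈ Finset.range 6, Nat.nth Nat.Prime j) = 30030 := by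
  norm_num [Finset.prod_range_succ, prv0, prv1, prv2, prv3, prv4, prv5, prv6, prv7, prv8, prv9, prv10, prv11, prv12, prv13, prv14, prv15]

theorem hprodv7 : (∏ j ∈ Finset.range 7, Nat.nth Nat.Prime j) = 510510 := by
  norm_num [Finset.prod_range_succ, prv0, prv1, prv2, prv3, prv4, prv5, prv6, prv7, prv8, prv9, prv10, prv11, prv12, prv13, prv14, prv15]

theorem hprodv8 : (∏ j ∈ Finset.range 8, Nat.nth Nat.Prime j) = 9699690 := by
  norm_num [Finset.prod_range_succ, prv0, prv1, prv2, prv3, prv4, prv5, prv6, prv7, prv8, prv9, prv10, prv11, prv12, prv13, prv14, prv15]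

theorem hprodv9 : (∏ j ∈ Finset.range 9, Nat.nth Nat.Prime j) = 223092870 := by
  norm_num [Finset.prod_range_succ, prv0, prv1, prv2, prv3, prv4, prv5, prv6, prv7, prv8, prv9, prv10, prv11, prv12, prv13, prv14, prv15]

theorem hprodv10 : (∏ j ∈ Finset.range 10, Nat.nth Nat.Prime j) = 6469693230 := by
  norm_num [Finset.prod_range_succ, prv0, prv1, prv2, prv3, prv4, prv5, prv6, prv7, prv8, prv9, prv10, prv11, prv12, prv13, prv14, prv15]

theorem hprodv11 : (∏ j ∈ Finset.range 11, Nat.nth Nat.Prime j) = 200560490130 := by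
  norm_num [Finset.prod_range_succ, prv0, prv1, prv2, prv3, prv4, prv5, prv6, prv7, prv8, prv9, prv10, prv11, prv12, prv13, prv14, prv15]

theorem hprodv12 : (∏ j ∈ Finset.range 12, Nat.nth Nat.Prime j) = 7420738134810 := by
  norm_num [Finset.prod_range_succ, prv0, prv1, prv2, prv3, prv4, prv5, prv6, prv7, prv8, prv9, prv10, prv11, prv12, prv13, prv14, prv15]

theorem hprodv13 : (∏ j ∈ Finset.range 13, Nat.nth Nat.Prime j) = 304250263527210 := by
  norm_num [Finset.prod_range_succ, prv0, prv1, prv2, prv3, prv4, prv5, prv6, prv7, prv8, prv9, prv10, prv11, prv12, prv13, prv14, prv15]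

theorem hprodv14 : (∏ j ∈ Finset.range 14, Nat.nth Nat.Prime j) = 13082761331670030 := by
  norm_num [Finset.prod_range_succ, prv0, prv1, prv2, prv3, prv4, prv5, prv6, prv7, prv8, prv9, prv10, prv11, prv12, prv13, prv14, prv15]

theorem hprodv15 : (∏ j ∈ Finset.range 15, Nat.nth Nat.Prime j) = 614889782588491410 := by
  norm_num [Finset.prod_range_succ, prv0, prv1, prv2, prv3, prv4, prv5, prv6, prv7, prv8, prv9, prv10, prv11, prv12, prv13, prv14, prv15]

theorem hprodv16 : (∏ j ∈ Finset.range 16, Nat.nth Nat.Prime j) = 32589158477190044730 := by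
  norm_num [Finset.prod_range_succ, prv0, prv1, prv2, prv3, prv4, prv5, prv6, prv7, prv8, prv9, prv10, prv11, prv12, prv13, prv14, prv15]

theorem prime_gap_three (p q r : ℕ) (hp : p.Prime) (hq : q.Prime) (hr : r.Prime)
    (h3 : 3 < p) (hpq : p < q) (hqr : q < r) : p + 6 ≤ r := by
  have d2p : ¬ (2 ∣ p) := fun h => by rcases (Nat.Prime.eq_one_or_self_of_dvd hp 2 h) with h'|h' <;> omega
  have d3p : ¬ (3 ∣ p) := fun h => by rcases (Nat.Prime.eq_one_or_self_of_dvd hp 3 h) with h'|h' <;> omega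
  have d2q : ¬ (2 ∣ q) := fun h => by rcases (Nat.Prime.eq_one_or_self_of_dvd hq 2 h) with h'|h' <;> omega
  have d3q : ¬ (3 ∣ q) := fun h => by rcases (Nat.Prime.eq_one_or_self_of_dvd hq 3 h) with h'|h' <;> omega
  have d2r : ¬ (2 ∣ r) := fun h => by rcases (Nat.Prime.eq_one_or_self_of_dvd hr 2 h) with h'|h' <;> omega
  have d3r : ¬ (3 ∣ r) := fun h => by rcases (Nat.Prime.eq_one_or_self_of_dvd hr 3 h) with h'|h' <;> omega
  have m2p : p % 2 = 1 := by omega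
  have m3p : p % 3 = 1 ∨ p % 3 = 2 := by omega
  have m2q : q % 2 = 1 := by omega
  have m3q : q % 3 = 1 ∨ q % 3 = 2 := by omega
  have m2r : r % 2 = 1 := by omega
  have m3r : r % 3 = 1 ∨ r % 3 = 2 := by omega
  omega

theorem nth_prime_lb (j : ℕ) (hj : 14 ≤ j) : 3 * j + 5 ≤ Nat.nth Nat.Prime j := by
  induction j using Nat.strong_induction_on with
  | _ j ih =>
    by_cases h14 : j = 14
    · subst h14; rw [prv14]
    · by_cases h15 : j = 15
      · subst h15; rw [prv15]; omega
      · have h16 : 16 ≤ j := by omega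
        have hprev := ih (j - 2) (by omega) (by omega)
        have hmono1 : Nat.nth Nat.Prime (j - 2) < Nat.nth Nat.Prime (j - 1) :=
          (Nat.nth_lt_nth Nat.infinite_setOf_prime).mpr (by omega)
        have hmono2 : Nat.nth Nat.Prime (j - 1) < Nat.nth Nat.Prime j :=
          (Nat.nth_lt_nth Nat.infinite_setOf_prime).mpr (by omega)
        have hgap := prime_gap_three (Nat.nth Nat.Prime (j - 2)) (Nat.nth Nat.Prime (j - 1))
          (Nat.nth Nat.Prime j) (Nat.prime_nth_prime _) (Nat.prime_nth_prime _)
          (Nat.prime_nth_prime _) (by omega) hmono1 hmono2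
        omega

theorem prod_nth_le (S : Finset ℕ) (hS : ∀ p ∈ S, Nat.Prime p) :
    ∏ j ∈ Finset.range S.card, Nat.nth Nat.Prime j ≤ ∏ p ∈ S, p := by
  induction S using Finset.induction_on_max with
  | empty => simp
  | insert a S ha ih =>
    have hSsub : ∀ p ∈ S, Nat.Prime p := fun p hp => hS p (Finset.mem_insert_of_mem hp)
    have haS : a ∉ S := fun h => lt_irrefl a (ha a h)
    rw [Finset.card_insert_of_notMem haS, Finset.prod_insert haS, Finset.prod_range_succ]
    have hnth : Nat.nth Nat.Prime S.card ≤ a := by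
      have hsub : insert a S ⊆ (Finset.range (a+1)).filter Nat.Prime := by
        intro x hx
        simp only [Finset.mem_filter, Finset.mem_range]
        rcases Finset.mem_insert.mp hx with h|h
        · exact ⟨by omega, hS x hx⟩
        · exact ⟨by have := ha x h; omega, hS x hx⟩
      have hcount : S.card + 1 ≤ Nat.count Nat.Prime (a+1) := by
        rw [Nat.count_eq_card_filter_range]
        calc S.card + 1 = (insert a S).card := (Finset.card_insert_of_notMem haS).symm
          _ ≤ _ := Finset.card_le_card hsub
      have := Nat.nth_lt_of_lt_count (p := Nat.Prime) (n := a+1) (k := S.card) (by omega)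
      omega
    calc (∏ j ∈ Finset.range S.card, Nat.nth Nat.Prime j) * Nat.nth Nat.Prime S.card
          ≤ (∏ p ∈ S, p) * a := Nat.mul_le_mul (ih hSsub) hnth
      _ = a * ∏ p ∈ S, p := Nat.mul_comm _ _

theorem log_le_div_e (t : ℝ) (ht : 0 < t) : Real.log t ≤ t / Real.exp 1 := by
  have h := Real.log_le_sub_one_of_pos (x := t / Real.exp 1) (by positivity)
  rw [Real.log_div (ne_of_gt ht) (Real.exp_ne_zero 1), Real.log_exp] at h
  linarith


theorem key_transfer (k : ℕ) (a L : ℝ) (ha : Real.exp 1 ≤ a) (haL : a ≤ L)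
    (h : (k:ℝ) * Real.log a ≤ 1.3841 * a) : (k:ℝ) * Real.log L ≤ 1.3841 * L := by
  have ha0 : 0 < a := lt_of_lt_of_le (Real.exp_pos 1) ha
  have hL0 : 0 < L := lt_of_lt_of_le ha0 haL
  have hmono := Real.log_div_self_antitoneOn (Set.mem_setOf.mpr ha)
    (Set.mem_setOf.mpr (ha.trans haL)) haL
  have hk0 : (0:ℝ) ≤ (k:ℝ) := Nat.cast_nonneg k
  have h1 : (k:ℝ) * (Real.log L / L) ≤ (k:ℝ) * (Real.log a / a) :=
    mul_le_mul_of_nonneg_left hmono hk0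
  have h2 : (k:ℝ) * (Real.log a / a) ≤ 1.3841 := by
    rw [mul_div_assoc'] at *
    exact (div_le_iff₀ ha0).mpr (by linarith)
  have h3 : (k:ℝ) * Real.log L / L ≤ 1.3841 := by
    rw [mul_div_assoc]; exact le_trans h1 h2
  calc (k:ℝ) * Real.log L = ((k:ℝ) * Real.log L / L) * L := by field_simp
    _ ≤ 1.3841 * L := mul_le_mul_of_nonneg_right h3 (le_of_lt hL0)

theorem cert (k p q m N P : ℕ) (x : ℝ)
    (hq : 0 < q) (hx0 : 0 < x) (hx1 : x < 1)
    (hpq4 : 4 * q ≤ p)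
    (hpow : (2:ℕ)^p ≤ P^q)
    (hP1 : 1 ≤ P)
    (hmx : (1 - x) * ((p:ℝ) * 0.6931472 / q) ≤ 2^m)
    (hfin : (k:ℝ) * ((m:ℝ) * 0.6931472 + ((∑ i ∈ range N, x^(i+1)/(i+1)) + x^(N+1)/(1-x)))
      ≤ 1.3841 * ((p:ℝ) * 0.6931471803 / q)) :
    ∀ L : ℝ, Real.log P ≤ L → (k:ℝ) * Real.log L ≤ 1.3841 * L := by
  intro L hL
  have hq0 : (0:ℝ) < q := by exact_mod_cast hq
  have hp4 : (4:ℝ) * q ≤ p := by exact_mod_cast hpq4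
  have hp0 : (0:ℝ) < p := by nlinarith
  set a : ℝ := (p:ℝ) * Real.log 2 / q with hadef
  have hlog2lo := Real.log_two_gt_d9
  have hlog2hi := Real.log_two_lt_d9
  have ha0 : 0 < a := by
    apply div_pos (mul_pos hp0 (by linarith)) hq0
  have ha_e : Real.exp 1 ≤ a := by
    have h1 : Real.exp 1 < 2.7182818286 := Real.exp_one_lt_d9
    rw [hadef, le_div_iff₀ hq0]
    nlinarith
  have ha_logP : a ≤ Real.log P := by
    have hcast : ((2:ℝ))^p ≤ (P:ℝ)^q := by exact_mod_cast hpow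
    have hlogle : (p:ℝ) * Real.log 2 ≤ (q:ℝ) * Real.log P := by
      rw [← Real.log_pow, ← Real.log_pow]
      exact Real.log_le_log (by positivity) hcast
    rw [hadef, div_le_iff₀ hq0]
    linarith [hlogle]
  have hx1' : (0:ℝ) < 1 - x := by linarith
  -- series bound
  have hser := Real.abs_log_sub_add_sum_range_le (x := x) (by rw [abs_of_pos hx0]; exact hx1) N
  rw [abs_of_pos hx0] at hser
  have hser' : -Real.log (1 - x) ≤ (∑ i ∈ range N, x^(i+1)/(i+1)) + x^(N+1)/(1-x) := by
    have := abs_le.mp hser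
    linarith [this.1, this.2]
  -- log a ≤ m*log2up + S + err
  have hu'0 : (0:ℝ) < (p:ℝ) * 0.6931472 / q := by positivity
  have hau : a ≤ (p:ℝ) * 0.6931472 / q := by
    rw [hadef]; gcongr; linarith
  have h2m : ((p:ℝ) * 0.6931472 / q) ≤ 2^m / (1-x) := by
    rw [le_div_iff₀ hx1']
    nlinarith [hmx]
  have hloga : Real.log a ≤ (m:ℝ) * 0.6931472 + ((∑ i ∈ range N, x^(i+1)/(i+1)) + x^(N+1)/(1-x)) := by
    have l1 : Real.log a ≤ Real.log (2^m / (1-x)) :=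
      Real.log_le_log ha0 (le_trans hau h2m)
    have l2 : Real.log ((2:ℝ)^m / (1-x)) = (m:ℝ) * Real.log 2 - Real.log (1-x) := by
      rw [Real.log_div (by positivity) (ne_of_gt hx1'), Real.log_pow]
    have l3 : (m:ℝ) * Real.log 2 ≤ (m:ℝ) * 0.6931472 :=
      mul_le_mul_of_nonneg_left (by linarith) (Nat.cast_nonneg m)
    rw [l2] at l1
    linarith [hser']
  have hcert : (k:ℝ) * Real.log a ≤ 1.3841 * a := by
    have hk0 : (0:ℝ) ≤ (k:ℝ) := Nat.cast_nonneg k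
    have step : (k:ℝ) * Real.log a ≤ (k:ℝ) * ((m:ℝ) * 0.6931472 + ((∑ i ∈ range N, x^(i+1)/(i+1)) + x^(N+1)/(1-x))) :=
      mul_le_mul_of_nonneg_left hloga hk0
    have last : 1.3841 * ((p:ℝ) * 0.6931471803 / q) ≤ 1.3841 * a := by
      rw [hadef]; gcongr <;> linarith
    linarith [hfin, step, last]
  exact key_transfer k a L ha_e (le_trans ha_logP hL) hcert


theorem theta_lb (k : ℕ) (hk : 16 ≤ k) :
    (k : ℝ) * Real.log k ≤ Real.log (∏ j ∈ Finset.range k, Nat.nth Nat.Prime j : ℕ) := by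
  induction k, hk using Nat.le_induction with
  | base =>
    rw [hprodv16]
    have hc : ((16:ℕ):ℝ) = (16:ℝ) := by norm_num
    rw [hc]
    have h16 : (16:ℝ) * Real.log 16 = 64 * Real.log 2 := by
      rw [show (16:ℝ) = 2^4 by norm_num, Real.log_pow]; push_cast; ring
    rw [h16, show (64:ℝ) * Real.log 2 = Real.log (2^64) by rw [Real.log_pow]; push_cast; ring]
    apply Real.log_le_log (by positivity)
    norm_num
  | succ k hk ih =>
    rw [Finset.prod_range_succ]
    have hProdPos : 0 < (∏ j ∈ Finset.range k, Nat.nth Nat.Prime j : ℕ) :=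
      Finset.prod_pos fun j _ => (Nat.prime_nth_prime j).pos
    have hNthPos : 0 < Nat.nth Nat.Prime k := (Nat.prime_nth_prime k).pos
    rw [Nat.cast_mul, Real.log_mul (by exact_mod_cast hProdPos.ne') (by exact_mod_cast hNthPos.ne'), Nat.cast_add, Nat.cast_one]
    have hnth := nth_prime_lb k (by omega)
    have hk0 : (0:ℝ) < k := by positivity
    have hlognth : Real.log (3 * (k:ℝ) + 5) ≤ Real.log (Nat.nth Nat.Prime k) := by
      apply Real.log_le_log (by positivity)
      exact_mod_cast hnth
    have l1 : Real.log ((k:ℝ) + 1) ≤ Real.log k + 1 / k := by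
      have h := Real.log_le_sub_one_of_pos (x := ((k:ℝ)+1) / k) (by positivity)
      rw [Real.log_div (by positivity) (ne_of_gt hk0)] at h
      have : ((k:ℝ)+1)/k - 1 = 1/k := by field_simp; ring
      linarith [this ▸ h]
    have l2 : 1 + Real.log ((k:ℝ) + 1) ≤ Real.log (3 * (k:ℝ) + 5) := by
      have hratio : Real.log (3 * (k:ℝ) + 5) - Real.log ((k:ℝ)+1) = Real.log ((3*(k:ℝ)+5)/((k:ℝ)+1)) := by
        rw [Real.log_div (by positivity) (by positivity)]
      have h3le : (3:ℝ) ≤ (3*(k:ℝ)+5)/((k:ℝ)+1) := by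
        rw [le_div_iff₀ (by positivity)]; linarith
      have hlog3 : (1:ℝ) ≤ Real.log 3 := by
        rw [show (1:ℝ) = Real.log (Real.exp 1) by rw [Real.log_exp]]
        apply Real.log_le_log (Real.exp_pos 1)
        linarith [Real.exp_one_lt_d9]
      have := Real.log_le_log (by norm_num : (0:ℝ) < 3) h3le
      linarith
    have lmul : (k:ℝ) * Real.log ((k:ℝ)+1) ≤ (k:ℝ) * Real.log k + 1 := by
      have h := mul_le_mul_of_nonneg_left l1 (le_of_lt hk0)
      have heq : (k:ℝ) * (Real.log k + 1/k) = (k:ℝ) * Real.log k + 1 := by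
        field_simp
      rw [heq] at h
      linarith
    have final : ((k:ℝ)+1) * Real.log ((k:ℝ)+1) ≤ (k:ℝ) * Real.log k + Real.log (Nat.nth Nat.Prime k) := by
      have expand : ((k:ℝ)+1) * Real.log ((k:ℝ)+1) = (k:ℝ) * Real.log ((k:ℝ)+1) + Real.log ((k:ℝ)+1) := by ring
      linarith
    linarith [final, ih]

theorem stmt_8 (n : ℕ) (hn : 3 ≤ n) :
    (n.primeFactors.card : ℝ) ≤ 1.3841 * Real.log n / Real.log (Real.log n) := by
  have hn0 : 0 < n := by omega
  set L : ℝ := Real.log n with hLdef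
  set k : ℕ := n.primeFactors.card with hkdef
  have hL3 : Real.log 3 ≤ L := Real.log_le_log (by norm_num) (by exact_mod_cast hn)
  have hL1 : (1:ℝ) < L := by
    have h3 : (1:ℝ) < Real.log 3 := by
      rw [show (1:ℝ) = Real.log (Real.exp 1) by rw [Real.log_exp]]
      apply Real.log_lt_log (Real.exp_pos 1)
      linarith [Real.exp_one_lt_d9]
    linarith
  have hL0 : (0:ℝ) < L := by linarith
  have hlogL0 : 0 < Real.log L := Real.log_pos hL1
  rw [le_div_iff₀ hlogL0]
  -- goal : (k:ℝ) * Real.log L ≤ 1.3841 * L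
  by_cases hk3 : k ≤ 3
  · have hlogLe : Real.log L ≤ L / Real.exp 1 := log_le_div_e L hL0
    have hke : (k:ℝ) ≤ 3 := by exact_mod_cast hk3
    have he := Real.exp_one_gt_d9
    have hkL : (k:ℝ) * Real.log L ≤ 3 * (L / Real.exp 1) := by
      apply mul_le_mul hke hlogLe (le_of_lt hlogL0) (by norm_num)
    have : 3 * (L / Real.exp 1) ≤ 1.3841 * L := by
      rw [div_eq_mul_inv]
      have hepos : (0:ℝ) < Real.exp 1 := Real.exp_pos 1
      rw [show 3 * (L * (Real.exp 1)⁻¹) = 3 * L / Real.exp 1 by ring, div_le_iff₀ hepos]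
      nlinarith
    linarith
  · push_neg at hk3
    have hk4 : 4 ≤ k := hk3
    -- primorial bound
    have hprime : ∀ p ∈ n.primeFactors, Nat.Prime p := fun p hp => Nat.prime_of_mem_primeFactors hp
    have hle1 : (∏ j ∈ Finset.range k, Nat.nth Nat.Prime j) ≤ ∏ p ∈ n.primeFactors, p :=
      prod_nth_le _ hprime
    have hle2 : (∏ p ∈ n.primeFactors, p) ≤ n :=
      Nat.le_of_dvd hn0 (Nat.prod_primeFactors_dvd n)
    have hlogP : Real.log (∏ j ∈ Finset.range k, Nat.nth Nat.Prime j : ℕ) ≤ L := by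
      rw [hLdef]
      apply Real.log_le_log
      · exact_mod_cast Finset.prod_pos fun j _ => (Nat.prime_nth_prime j).pos
      · exact_mod_cast le_trans hle1 hle2
    by_cases hk16 : 16 ≤ k
    · -- large k
      have htheta := theta_lb k hk16
      set a : ℝ := (k:ℝ) * Real.log k with hadef
      have hk0 : (0:ℝ) < k := by positivity
      have hlogk : Real.log 16 ≤ Real.log k := Real.log_le_log (by norm_num) (by exact_mod_cast hk16)
      have hlog16 : (2.77:ℝ) ≤ Real.log 16 := by
        rw [show (16:ℝ) = 2^4 by norm_num, Real.log_pow]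
        push_cast
        nlinarith [Real.log_two_gt_d9]
      have hlogkpos : (0:ℝ) < Real.log k := by linarith
      have ha_e : Real.exp 1 ≤ a := by
        have : (16:ℝ) ≤ k := by exact_mod_cast hk16
        nlinarith [Real.exp_one_lt_d9]
      have haL : a ≤ L := le_trans htheta hlogP
      have hcert : (k:ℝ) * Real.log a ≤ 1.3841 * a := by
        have hloga : Real.log a = Real.log k + Real.log (Real.log k) := by
          rw [hadef, Real.log_mul (ne_of_gt hk0) (ne_of_gt hlogkpos)]
        have hloglog : Real.log (Real.log k) ≤ Real.log k / Real.exp 1 :=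
          log_le_div_e _ hlogkpos
        have he := Real.exp_one_gt_d9
        have hepos : (0:ℝ) < Real.exp 1 := Real.exp_pos 1
        have hdiv : Real.log k / Real.exp 1 ≤ Real.log k * 0.3841 := by
          rw [div_le_iff₀ hepos]
          nlinarith
        rw [hloga, hadef]
        nlinarith
      exact key_transfer k a L ha_e haL hcert
    · push_neg at hk16
      interval_cases k
      · -- k = 4
        rw [hprodv4] at hlogP
        exact_mod_cast cert 4 1535 199 2 3 210 (314833/1250000)
          (by norm_num) (by norm_num) (by norm_num) (by norm_num) (by decide +kernel)
          (by norm_num) (by norm_num) (by norm_num [Finset.sum_range_succ]) _ hlogP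
      · -- k = 5
        rw [hprodv5] at hlogP
        exact_mod_cast cert 5 1866 167 2 3 2310 (4835369/10000000)
          (by norm_num) (by norm_num) (by norm_num) (by norm_num) (by decide +kernel)
          (by norm_num) (by norm_num) (by norm_num [Finset.sum_range_succ]) _ hlogP
      · -- k = 6
        rw [hprodv6] at hlogP
        exact_mod_cast cert 6 2008 135 3 3 30030 (1120243/5000000)
          (by norm_num) (by norm_num) (by norm_num) (by norm_num) (by decide +kernel)
          (by norm_num) (by norm_num) (by norm_num [Finset.sum_range_succ]) _ hlogP
      · -- k = 7
        rw [hprodv7] at hlogP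
        exact_mod_cast cert 7 493 26 3 4 510510 (1956587/5000000)
          (by norm_num) (by norm_num) (by norm_num) (by norm_num) (by decide +kernel)
          (by norm_num) (by norm_num) (by norm_num [Finset.sum_range_succ]) _ hlogP
      · -- k = 8
        rw [hprodv8] at hlogP
        exact_mod_cast cert 8 3435 148 4 3 9699690 (10887/2000000)
          (by norm_num) (by norm_num) (by norm_num) (by norm_num) (by decide +kernel)
          (by norm_num) (by norm_num) (by norm_num [Finset.sum_range_succ]) _ hlogP
      · -- k = 9
        rw [hprodv9] at hlogP
        exact_mod_cast cert 9 76987 2776 4 4 223092870 (1676681/10000000)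
          (by norm_num) (by norm_num) (by norm_num) (by norm_num) (by decide +kernel)
          (by norm_num) (by norm_num) (by norm_num [Finset.sum_range_succ]) _ hlogP
      · -- k = 10
        rw [hprodv10] at hlogP
        exact_mod_cast cert 10 717 22 4 3 6469693230 (1458657/5000000)
          (by norm_num) (by norm_num) (by norm_num) (by norm_num) (by decide +kernel)
          (by norm_num) (by norm_num) (by norm_num [Finset.sum_range_succ]) _ hlogP
      · -- k = 11
        rw [hprodv11] at hlogP
        exact_mod_cast cert 11 7509 200 4 4 200560490130 (96297/250000)
          (by norm_num) (by norm_num) (by norm_num) (by norm_num) (by decide +kernel)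
          (by norm_num) (by norm_num) (by norm_num [Finset.sum_range_succ]) _ hlogP
      · -- k = 12
        rw [hprodv12] at hlogP
        exact_mod_cast cert 12 6969 163 4 5 7420738134810 (4601021/10000000)
          (by norm_num) (by norm_num) (by norm_num) (by norm_num) (by decide +kernel)
          (by norm_num) (by norm_num) (by norm_num [Finset.sum_range_succ]) _ hlogP
      · -- k = 13
        rw [hprodv13] at hlogP
        exact_mod_cast cert 13 4715 98 5 3 304250263527210 (50559/1250000)
          (by norm_num) (by norm_num) (by norm_num) (by norm_num) (by decide +kernel)
          (by norm_num) (by norm_num) (by norm_num [Finset.sum_range_succ]) _ hlogP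
      · -- k = 14
        rw [hprodv14] at hlogP
        exact_mod_cast cert 14 696 13 5 3 13082761331670030 (344249/2500000)
          (by norm_num) (by norm_num) (by norm_num) (by norm_num) (by decide +kernel)
          (by norm_num) (by norm_num) (by norm_num [Finset.sum_range_succ]) _ hlogP
      · -- k = 15
        rw [hprodv15] at hlogP
        exact_mod_cast cert 15 2541 43 5 3 614889782588491410 (546883/2500000)
          (by norm_num) (by norm_num) (by norm_num) (by norm_num) (by decide +kernel)
          (by norm_num) (by norm_num) (by norm_num [Finset.sum_range_succ]) _ hlogP
end

section
/- Assume that for all t ≥ 59, y/(2(log y)²) < π(y) − y/log y < 3y/(2(log y)²). Then for every real y ≥ 59, ∑_{p prime, p > y} 1/p² > (1/(y·log y))·(1 − 5/(2·log y)). -/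
open MeasureTheory Set Filter Real

lemma deriv_neg_inv_sq {t : ℝ} (ht : 0 < t) :
    HasDerivAt (fun t : ℝ => -(t ^ 2)⁻¹) (2 / t ^ 3) t := by
  have h := ((hasDerivAt_pow 2 t).inv (by positivity)).neg
  refine h.congr_deriv ?_
  field_simp
  ring

lemma tendsto_neg_inv_sq : Tendsto (fun t : ℝ => -(t ^ 2)⁻¹) atTop (nhds 0) := by
  have : Tendsto (fun t : ℝ => (t ^ 2)⁻¹) atTop (nhds 0) :=
    (tendsto_pow_atTop (by norm_num)).inv_tendsto_atTop
  simpa using this.neg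

lemma integrableOn_two_div_cube {c : ℝ} (hc : 0 < c) :
    IntegrableOn (fun t : ℝ => 2 / t ^ 3) (Ioi c) := by
  apply integrableOn_Ioi_deriv_of_nonneg
    (g := fun t : ℝ => -(t ^ 2)⁻¹)
  · exact ((deriv_neg_inv_sq hc).continuousAt).continuousWithinAt
  · exact fun x hx => deriv_neg_inv_sq (hc.trans hx)
  · intro x hx
    have hx0 : (0:ℝ) < x := hc.trans hx
    positivity
  · exact tendsto_neg_inv_sq

lemma integral_two_div_cube {c : ℝ} (hc : 0 < c) :
    ∫ t in Ioi c, 2 / t ^ 3 = 1 / c ^ 2 := by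
  rw [integral_Ioi_of_hasDerivAt_of_tendsto
    ((deriv_neg_inv_sq hc).continuousAt).continuousWithinAt
    (fun x hx => deriv_neg_inv_sq (hc.trans hx))
    (integrableOn_two_div_cube hc) tendsto_neg_inv_sq]
  field_simp
  ring
open MeasureTheory Set Filter Real
open scoped ENNReal NNReal

lemma log59 : 4 < Real.log 59 := by
  rw [Real.lt_log_iff_exp_lt (by norm_num)]
  have h := Real.exp_one_lt_d9
  calc Real.exp 4 = (Real.exp 1) ^ (4:ℕ) := by
        rw [← Real.exp_nat_mul]; norm_num
    _ < 2.7182818286 ^ (4:ℕ) := by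
        apply pow_lt_pow_left₀ h (Real.exp_pos 1).le; norm_num
    _ < 59 := by norm_num

lemma count_card (a b : ℕ) (hab : a ≤ b) :
    ((Finset.range (b+1)).filter (fun n => n.Prime ∧ a < n)).card
      = Nat.primeCounting b - Nat.primeCounting a := by
  have hb : Nat.primeCounting b = ((Finset.range (b+1)).filter Nat.Prime).card := by
    rw [Nat.primeCounting, Nat.primeCounting', Nat.count_eq_card_filter_range]
  have ha : Nat.primeCounting a
      = ((Finset.range (b+1)).filter (fun n => n.Prime ∧ ¬ a < n)).card := by
    rw [Nat.primeCounting, Nat.primeCounting', Nat.count_eq_card_filter_range]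
    congr 1
    ext n
    simp only [Finset.mem_filter, Finset.mem_range, not_lt]
    constructor
    · rintro ⟨h1, h2⟩; exact ⟨by omega, h2, by omega⟩
    · rintro ⟨h1, h2, h3⟩; exact ⟨by omega, h2⟩
  have key := Finset.card_filter_add_card_filter_not
    (s := (Finset.range (b+1)).filter Nat.Prime) (p := fun n => a < n)
  rw [Finset.filter_filter, Finset.filter_filter] at key
  omega

lemma tsum_primes_count (y t : ℝ) (hy : 0 ≤ y)
    (ht : t ∉ Set.range (Nat.cast : ℕ → ℝ)) (hyt : y < t) (c : ℝ≥0∞) :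
    (∑' p : Nat.Primes, if y < (p:ℝ) ∧ (p:ℝ) < t then c else 0)
    = (Nat.primeCounting ⌊t⌋₊ - Nat.primeCounting ⌊y⌋₊ : ℕ) * c := by
  have ht0 : 0 ≤ t := hy.trans hyt.le
  have key1 : ∀ n : ℕ, (y < (n:ℝ)) ↔ ⌊y⌋₊ < n := fun n => (Nat.floor_lt hy).symm
  have key2 : ∀ n : ℕ, ((n:ℝ) < t) ↔ n ≤ ⌊t⌋₊ := by
    intro n
    constructor
    · intro h; exact Nat.le_floor h.le
    · intro h
      have h1 : (n:ℝ) ≤ ⌊t⌋₊ := Nat.cast_le.mpr h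
      have h2 : (⌊t⌋₊:ℝ) ≤ t := Nat.floor_le ht0
      rcases lt_or_eq_of_le (h1.trans h2) with h3 | h3
      · exact h3
      · exact absurd ⟨n, h3⟩ ht
  have step1 : (∑' p : Nat.Primes, if y < (p:ℝ) ∧ (p:ℝ) < t then c else 0)
      = ∑' n : ℕ, Set.indicator {n : ℕ | n.Prime}
          (fun n => if y < (n:ℝ) ∧ (n:ℝ) < t then c else 0) n :=
    tsum_subtype {n : ℕ | n.Prime} (fun n => if y < (n:ℝ) ∧ (n:ℝ) < t then c else 0)
  rw [step1]
  have step2 : ∀ n : ℕ, Set.indicator {n : ℕ | n.Prime}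
        (fun n => if y < (n:ℝ) ∧ (n:ℝ) < t then c else 0) n
      = if n.Prime ∧ ⌊y⌋₊ < n ∧ n ≤ ⌊t⌋₊ then c else 0 := by
    intro n
    rw [Set.indicator_apply]
    by_cases hp : n.Prime <;> simp [hp, key1 n, key2 n, and_assoc]
  simp only [step2]
  rw [tsum_eq_sum (s := (Finset.range (⌊t⌋₊+1)).filter
      (fun n => n.Prime ∧ ⌊y⌋₊ < n))]
  · rw [Finset.sum_ite_of_true, Finset.sum_const, nsmul_eq_mul,
      count_card _ _ (Nat.floor_le_floor hyt.le)]
    intro n hn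
    simp only [Finset.mem_filter, Finset.mem_range] at hn
    exact ⟨hn.2.1, hn.2.2, by omega⟩
  · intro n hn
    simp only [Finset.mem_filter, Finset.mem_range, not_and, not_lt] at hn
    rw [if_neg]
    rintro ⟨h1, h2, h3⟩
    exact absurd (hn (by omega) h1) (by omega)
lemma deriv_neg_inv {t : ℝ} (ht : 0 < t) :
    HasDerivAt (fun t : ℝ => -t⁻¹) ((t ^ 2)⁻¹) t := by
  simpa using (hasDerivAt_inv ht.ne').fun_neg

lemma integrableOn_inv_sq {c : ℝ} (hc : 0 < c) :
    IntegrableOn (fun t : ℝ => (t ^ 2)⁻¹) (Ioi c) := by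
  apply integrableOn_Ioi_deriv_of_nonneg (g := fun t : ℝ => -t⁻¹)
  · exact ((deriv_neg_inv hc).continuousAt).continuousWithinAt
  · exact fun x hx => deriv_neg_inv (hc.trans hx)
  · intro x hx
    have hx0 : (0:ℝ) < x := hc.trans hx
    positivity
  · simpa using tendsto_inv_atTop_zero.neg

lemma sum_eq_integral (y : ℝ) (hy : 59 ≤ y) :
    (∑' p : Nat.Primes, if y < (p : ℝ) then 1 / (p : ℝ) ^ 2 else 0)
      = ∫ t in Ioi y, ((Nat.primeCounting ⌊t⌋₊ - Nat.primeCounting ⌊y⌋₊ : ℕ) : ℝ)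
          * (2 / t ^ 3) := by
  have hy0 : (0:ℝ) < y := by linarith
  set term : Nat.Primes → ℝ := fun p => if y < (p : ℝ) then 1 / (p : ℝ) ^ 2 else 0 with hterm
  set g : ℝ → ℝ := fun t =>
    ((Nat.primeCounting ⌊t⌋₊ - Nat.primeCounting ⌊y⌋₊ : ℕ) : ℝ) * (2 / t ^ 3) with hg
  set F : Nat.Primes → ℝ → ℝ≥0∞ := fun p t =>
    if y < (p : ℝ) ∧ (p : ℝ) < t then ENNReal.ofReal (2 / t ^ 3) else 0 with hF
  -- nonnegativity and summability
  have hnonneg : ∀ p : Nat.Primes, 0 ≤ term p := by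
    intro p; rw [hterm]; dsimp only; split_ifs with h
    · positivity
    · exact le_rfl
  have hsummable : Summable term := by
    have base : Summable (fun n : ℕ => 1 / (n:ℝ) ^ 2) :=
      Real.summable_one_div_nat_pow.mpr one_lt_two
    have base2 : Summable (fun p : Nat.Primes => 1 / ((p:ℕ):ℝ) ^ 2) :=
      base.comp_injective Subtype.coe_injective
    apply Summable.of_nonneg_of_le hnonneg _ base2
    intro p; rw [hterm]; dsimp only; split_ifs with h
    · exact le_rfl
    · positivity
  -- measurability of the nat-count function
  have hNmeas : Measurable g := by
    apply Measurable.mul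
    · exact (measurable_from_nat
        (f := fun n : ℕ => ((Nat.primeCounting n - Nat.primeCounting ⌊y⌋₊ : ℕ) : ℝ))).comp
        Nat.measurable_floor
    · exact measurable_const.div (measurable_id.pow_const 3)
  -- integrability of g on Ioi y
  have hgbound : ∀ t ∈ Ioi y, ‖g t‖ ≤ 4 * (t ^ 2)⁻¹ := by
    intro t ht
    have ht1 : (59:ℝ) < t := lt_of_le_of_lt hy ht
    have ht0 : (0:ℝ) < t := by linarith
    have hN : ((Nat.primeCounting ⌊t⌋₊ - Nat.primeCounting ⌊y⌋₊ : ℕ) : ℝ) ≤ 2 * t := by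
      have h1 : (Nat.primeCounting ⌊t⌋₊ - Nat.primeCounting ⌊y⌋₊ : ℕ) ≤ ⌊t⌋₊ + 1 := by
        have := Nat.count_le (p := Nat.Prime) (n := ⌊t⌋₊ + 1)
        have h2 : Nat.primeCounting ⌊t⌋₊ ≤ ⌊t⌋₊ + 1 := by
          rw [Nat.primeCounting, Nat.primeCounting']; exact this
        omega
      have h3 : ((⌊t⌋₊ : ℝ) + 1) ≤ 2 * t := by
        have := Nat.floor_le ht0.le
        linarith
      calc ((Nat.primeCounting ⌊t⌋₊ - Nat.primeCounting ⌊y⌋₊ : ℕ) : ℝ)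
          ≤ ((⌊t⌋₊ + 1 : ℕ) : ℝ) := Nat.cast_le.mpr h1
        _ = (⌊t⌋₊ : ℝ) + 1 := by push_cast; ring
        _ ≤ 2 * t := h3
    have hgnn : 0 ≤ g t := by rw [hg]; dsimp only; positivity
    rw [Real.norm_eq_abs, abs_of_nonneg hgnn, hg]
    dsimp only
    have h23 : 2 * t * (2 / t ^ 3) = 4 * (t ^ 2)⁻¹ := by field_simp; ring
    calc ((Nat.primeCounting ⌊t⌋₊ - Nat.primeCounting ⌊y⌋₊ : ℕ) : ℝ) * (2 / t ^ 3)
        ≤ 2 * t * (2 / t ^ 3) := by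
          apply mul_le_mul_of_nonneg_right hN (by positivity)
      _ = 4 * (t ^ 2)⁻¹ := h23
  have hgint : IntegrableOn g (Ioi y) := by
    apply Integrable.mono' ((integrableOn_inv_sq hy0).const_mul 4)
      hNmeas.aestronglyMeasurable.restrict
    exact (ae_restrict_iff' measurableSet_Ioi).mpr (ae_of_all _ hgbound)
  have hgnn : ∀ t ∈ Ioi y, 0 ≤ g t := by
    intro t ht
    have ht0 : (0:ℝ) < t := lt_trans hy0 ht
    rw [hg]; dsimp only; positivity
  -- Step 1: ofReal of the tsum
  have step1 : ENNReal.ofReal (∑' p, term p) = ∑' p, ENNReal.ofReal (term p) :=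
    ENNReal.ofReal_tsum_of_nonneg hnonneg hsummable
  -- Step 2: per-prime lintegral
  have step2 : ∀ p : Nat.Primes, ENNReal.ofReal (term p) = ∫⁻ t, F p t := by
    intro p
    have hp2 : 2 ≤ (p:ℕ) := p.2.two_le
    have hp0 : (0:ℝ) < (p:ℕ) := by positivity
    by_cases hyp : y < (p:ℝ)
    · have hFeq : ∀ t : ℝ, F p t = (Ioi ((p:ℕ):ℝ)).indicator
          (fun t => ENNReal.ofReal (2 / t ^ 3)) t := by
        intro t
        rw [hF, Set.indicator_apply]
        simp only [mem_Ioi, hyp, true_and]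
      rw [funext hFeq, lintegral_indicator measurableSet_Ioi]
      have : ∫⁻ t in Ioi ((p:ℕ):ℝ), ENNReal.ofReal (2 / t ^ 3)
          = ENNReal.ofReal (∫ t in Ioi ((p:ℕ):ℝ), 2 / t ^ 3) := by
        rw [ofReal_integral_eq_lintegral_ofReal (integrableOn_two_div_cube hp0)]
        exact (ae_restrict_iff' measurableSet_Ioi).mpr (ae_of_all _ (fun t ht => by
          have : (0:ℝ) < t := lt_trans hp0 ht
          positivity))
      rw [this, integral_two_div_cube hp0, hterm]
      dsimp only
      rw [if_pos hyp]
    · rw [hterm]; dsimp only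
      rw [if_neg hyp]
      have hFeq : ∀ t : ℝ, F p t = 0 := by
        intro t; rw [hF]; dsimp only
        rw [if_neg (fun hc => hyp hc.1)]
      rw [funext hFeq]
      simp
  -- Step 3: swap sum and lintegral
  have hFmeas : ∀ p : Nat.Primes, Measurable (F p) := by
    intro p
    have : F p = Set.indicator {t : ℝ | y < (p:ℝ) ∧ (p:ℝ) < t}
        (fun t => ENNReal.ofReal (2 / t ^ 3)) := by
      funext t; rw [hF, Set.indicator_apply]; rfl
    rw [this]
    apply Measurable.indicator
    · exact (measurable_const.div (measurable_id.pow_const 3)).ennreal_ofReal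
    · by_cases hyp : y < (p:ℝ)
      · have : {t : ℝ | y < (p:ℝ) ∧ (p:ℝ) < t} = Ioi ((p:ℕ):ℝ) := by
          ext t; simp [hyp, mem_Ioi]
        rw [this]; exact measurableSet_Ioi
      · have : {t : ℝ | y < (p:ℝ) ∧ (p:ℝ) < t} = ∅ := by
          ext t; simp [hyp]
        rw [this]; exact MeasurableSet.empty
  have step3 : ∑' p, ∫⁻ t, F p t = ∫⁻ t, ∑' p, F p t :=
    (lintegral_tsum (fun p => (hFmeas p).aemeasurable)).symm
  -- Step 4: identify the inner sum a.e.
  have hae : ∀ᵐ t : ℝ, (∑' p, F p t)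
      = (Ioi y).indicator (fun t => ENNReal.ofReal (g t)) t := by
    have hcount : ∀ᵐ t : ℝ, t ∉ Set.range (Nat.cast : ℕ → ℝ) := by
      have := (Set.countable_range (Nat.cast : ℕ → ℝ)).measure_zero
        (volume : Measure ℝ)
      exact (MeasureTheory.measure_eq_zero_iff_ae_notMem).mp this
    filter_upwards [hcount] with t ht
    by_cases hyt : y < t
    · have ht0 : (0:ℝ) < t := lt_trans hy0 hyt
      rw [Set.indicator_of_mem (mem_Ioi.mpr hyt)]
      have := tsum_primes_count y t hy0.le ht hyt (ENNReal.ofReal (2 / t ^ 3))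
      rw [hF]
      dsimp only
      rw [this, hg]
      dsimp only
      rw [ENNReal.ofReal_mul (by positivity), ENNReal.ofReal_natCast]
    · rw [Set.indicator_of_notMem (by simpa using hyt)]
      have : ∀ p : Nat.Primes, F p t = 0 := by
        intro p; rw [hF]; dsimp only
        rw [if_neg]
        rintro ⟨h1, h2⟩
        exact hyt (lt_trans h1 h2)
      rw [funext this]; simp
  -- combine
  have key : ENNReal.ofReal (∑' p, term p) = ENNReal.ofReal (∫ t in Ioi y, g t) := by
    rw [step1]
    rw [tsum_congr step2, step3, lintegral_congr_ae hae,
      lintegral_indicator measurableSet_Ioi,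
      ← ofReal_integral_eq_lintegral_ofReal hgint
        ((ae_restrict_iff' measurableSet_Ioi).mpr (ae_of_all _ hgnn))]
  have h1 : 0 ≤ ∑' p, term p := tsum_nonneg hnonneg
  have h2 : 0 ≤ ∫ t in Ioi y, g t := setIntegral_nonneg measurableSet_Ioi hgnn
  exact (ENNReal.ofReal_eq_ofReal_iff h1 h2).mp key
lemma integrableOn_count_mul (y : ℝ) (hy : 59 ≤ y) :
    IntegrableOn (fun t : ℝ =>
      ((Nat.primeCounting ⌊t⌋₊ - Nat.primeCounting ⌊y⌋₊ : ℕ) : ℝ) * (2 / t ^ 3))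
      (Ioi y) := by
  have hy0 : (0:ℝ) < y := by linarith
  have hNmeas : Measurable (fun t : ℝ =>
      ((Nat.primeCounting ⌊t⌋₊ - Nat.primeCounting ⌊y⌋₊ : ℕ) : ℝ) * (2 / t ^ 3)) := by
    apply Measurable.mul
    · exact (measurable_from_nat
        (f := fun n : ℕ => ((Nat.primeCounting n - Nat.primeCounting ⌊y⌋₊ : ℕ) : ℝ))).comp
        Nat.measurable_floor
    · exact measurable_const.div (measurable_id.pow_const 3)
  apply Integrable.mono' ((integrableOn_inv_sq hy0).const_mul 4)
    hNmeas.aestronglyMeasurable.restrict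
  apply (ae_restrict_iff' measurableSet_Ioi).mpr (ae_of_all _ _)
  intro t ht
  have ht1 : (59:ℝ) < t := lt_of_le_of_lt hy ht
  have ht0 : (0:ℝ) < t := by linarith
  have hN : ((Nat.primeCounting ⌊t⌋₊ - Nat.primeCounting ⌊y⌋₊ : ℕ) : ℝ) ≤ 2 * t := by
    have h1 : (Nat.primeCounting ⌊t⌋₊ - Nat.primeCounting ⌊y⌋₊ : ℕ) ≤ ⌊t⌋₊ + 1 := by
      have h2 : Nat.primeCounting ⌊t⌋₊ ≤ ⌊t⌋₊ + 1 := by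
        rw [Nat.primeCounting, Nat.primeCounting']
        exact Nat.count_le _
      omega
    have h3 : ((⌊t⌋₊ : ℝ) + 1) ≤ 2 * t := by
      have := Nat.floor_le ht0.le
      linarith
    calc ((Nat.primeCounting ⌊t⌋₊ - Nat.primeCounting ⌊y⌋₊ : ℕ) : ℝ)
        ≤ ((⌊t⌋₊ + 1 : ℕ) : ℝ) := Nat.cast_le.mpr h1
      _ = (⌊t⌋₊ : ℝ) + 1 := by push_cast; ring
      _ ≤ 2 * t := h3
  have hgnn : (0:ℝ) ≤ ((Nat.primeCounting ⌊t⌋₊ - Nat.primeCounting ⌊y⌋₊ : ℕ) : ℝ)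
      * (2 / t ^ 3) := by positivity
  rw [Real.norm_eq_abs, abs_of_nonneg hgnn]
  have h23 : 2 * t * (2 / t ^ 3) = 4 * (t ^ 2)⁻¹ := by field_simp; ring
  calc ((Nat.primeCounting ⌊t⌋₊ - Nat.primeCounting ⌊y⌋₊ : ℕ) : ℝ) * (2 / t ^ 3)
      ≤ 2 * t * (2 / t ^ 3) := mul_le_mul_of_nonneg_right hN (by positivity)
    _ = 4 * (t ^ 2)⁻¹ := h23

lemma hasDerivAt_G {t : ℝ} (ht : 1 < t) :
    HasDerivAt (fun t : ℝ => -2 * (t * Real.log t)⁻¹ + (t * (Real.log t) ^ 2)⁻¹)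
      (2 / (t ^ 2 * Real.log t) + 1 / (t ^ 2 * (Real.log t) ^ 2)
        - 2 / (t ^ 2 * (Real.log t) ^ 3)) t := by
  have ht0 : (0:ℝ) < t := lt_trans one_pos ht
  have hlt : 0 < Real.log t := Real.log_pos ht
  have h1 : HasDerivAt (fun t : ℝ => t * Real.log t) (Real.log t + 1) t := by
    have := (hasDerivAt_id t).mul (Real.hasDerivAt_log ht0.ne')
    refine this.congr_deriv ?_
    field_simp
    simp only [id]; ring
  have h2 : HasDerivAt (fun t : ℝ => t * (Real.log t) ^ 2)
      ((Real.log t) ^ 2 + 2 * Real.log t) t := by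
    have := (hasDerivAt_id t).mul ((Real.hasDerivAt_log ht0.ne').pow 2)
    refine this.congr_deriv ?_
    field_simp
    simp only [id, Pi.pow_apply]; norm_num; ring
  have hne1 : t * Real.log t ≠ 0 := by positivity
  have hne2 : t * (Real.log t) ^ 2 ≠ 0 := by positivity
  have h3 := ((h1.inv hne1).const_mul (-2 : ℝ)).add (h2.inv hne2)
  refine h3.congr_deriv ?_
  field_simp
  ring

lemma tendsto_G : Filter.Tendsto
    (fun t : ℝ => -2 * (t * Real.log t)⁻¹ + (t * (Real.log t) ^ 2)⁻¹)
    atTop (nhds 0) := by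
  have h1 : Filter.Tendsto (fun t : ℝ => t * Real.log t) atTop atTop :=
    tendsto_id.atTop_mul_atTop₀ Real.tendsto_log_atTop
  have h2 : Filter.Tendsto (fun t : ℝ => t * (Real.log t) ^ 2) atTop atTop := by
    have := tendsto_id.atTop_mul_atTop₀
      (Real.tendsto_log_atTop.atTop_mul_atTop₀ Real.tendsto_log_atTop)
    convert this using 2 with t
    simp only [id_eq]
    ring
  have g1 := h1.inv_tendsto_atTop
  have g2 := h2.inv_tendsto_atTop
  have := (g1.const_mul (-2 : ℝ)).add g2
  simpa using this

theorem stmt_12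
    (h : ∀ t : ℝ, 59 ≤ t →
      t / (2 * (Real.log t) ^ 2) < (Nat.primeCounting ⌊t⌋₊ : ℝ) - t / Real.log t ∧
      (Nat.primeCounting ⌊t⌋₊ : ℝ) - t / Real.log t < 3 * t / (2 * (Real.log t) ^ 2))
    (y : ℝ) (hy : 59 ≤ y) :
    (∑' p : Nat.Primes, if y < (p : ℝ) then 1 / (p : ℝ) ^ 2 else 0)
      > (1 / (y * Real.log y)) * (1 - 5 / (2 * Real.log y)) := by
  have hy0 : (0:ℝ) < y := by linarith
  have hy1 : (1:ℝ) < y := by linarith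
  have hL : 4 < Real.log y := lt_of_lt_of_le log59 (Real.log_le_log (by norm_num) hy)
  have hL0 : 0 < Real.log y := by linarith
  set L := Real.log y with hLdef
  set Py := (Nat.primeCounting ⌊y⌋₊ : ℝ) with hPy
  set G : ℝ → ℝ := fun t => -2 * (t * Real.log t)⁻¹ + (t * (Real.log t) ^ 2)⁻¹ with hG
  set H : ℝ → ℝ := fun t => G t + (-Py) * (-(t ^ 2)⁻¹) with hH
  set G' : ℝ → ℝ := fun t => 2 / (t ^ 2 * Real.log t) + 1 / (t ^ 2 * (Real.log t) ^ 2)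
    - 2 / (t ^ 2 * (Real.log t) ^ 3) with hG'
  set H' : ℝ → ℝ := fun t => G' t + (-Py) * (2 / t ^ 3) with hH'
  set f : ℝ → ℝ := fun t =>
    ((Nat.primeCounting ⌊t⌋₊ - Nat.primeCounting ⌊y⌋₊ : ℕ) : ℝ) * (2 / t ^ 3) with hf
  -- derivative facts
  have hderivH : ∀ t : ℝ, 1 < t → HasDerivAt H (H' t) t := by
    intro t ht
    have ht0 : (0:ℝ) < t := lt_trans one_pos ht
    exact (hasDerivAt_G ht).add ((deriv_neg_inv_sq ht0).const_mul (-Py))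
  have htendH : Filter.Tendsto H atTop (nhds 0) := by
    have h0 : Filter.Tendsto H atTop (nhds (0 + (-Py) * 0)) :=
      tendsto_G.add (tendsto_neg_inv_sq.const_mul (-Py))
    rw [show (0:ℝ) + (-Py) * 0 = 0 from by ring] at h0
    exact h0
  -- G' is nonneg on Ioi y
  have hG'nn : ∀ t ∈ Ioi y, 0 ≤ G' t := by
    intro t ht
    have ht59 : (59:ℝ) < t := lt_of_le_of_lt hy ht
    have ht0 : (0:ℝ) < t := by linarith
    have hlt : 4 < Real.log t := by
      calc (4:ℝ) < L := hL
        _ ≤ Real.log t := Real.log_le_log hy0 (le_of_lt ht)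
    have hlt0 : 0 < Real.log t := by linarith
    have e : G' t = (2 * (Real.log t) ^ 2 + Real.log t - 2)
        / (t ^ 2 * (Real.log t) ^ 3) := by
      rw [hG']; field_simp
    rw [e]
    apply div_nonneg _ (by positivity)
    nlinarith
  have hG'int : IntegrableOn G' (Ioi y) := by
    apply integrableOn_Ioi_deriv_of_nonneg (g := G)
    · exact ((hasDerivAt_G hy1).continuousAt).continuousWithinAt
    · exact fun x hx => hasDerivAt_G (lt_trans hy1 hx)
    · exact hG'nn
    · exact tendsto_G
  have hH'int : IntegrableOn H' (Ioi y) :=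
    hG'int.add ((integrableOn_two_div_cube hy0).const_mul (-Py))
  have hintH' : ∫ t in Ioi y, H' t = 0 - H y := by
    apply integral_Ioi_of_hasDerivAt_of_tendsto
      ((hderivH y hy1).continuousAt).continuousWithinAt
      (fun x hx => hderivH x (lt_trans hy1 hx)) hH'int htendH
  -- pointwise comparison
  have hcmp : ∀ t ∈ Ioi y, H' t ≤ f t := by
    intro t ht
    have ht59 : (59:ℝ) ≤ t := le_of_lt (lt_of_le_of_lt hy ht)
    have ht0 : (0:ℝ) < t := by linarith
    have hlt : 4 < Real.log t := by
      calc (4:ℝ) < L := hL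
        _ ≤ Real.log t := Real.log_le_log hy0 (le_of_lt (mem_Ioi.mp ht))
    have hlt0 : 0 < Real.log t := by linarith
    have hmono : Nat.primeCounting ⌊y⌋₊ ≤ Nat.primeCounting ⌊t⌋₊ :=
      Nat.monotone_primeCounting (Nat.floor_le_floor (le_of_lt (mem_Ioi.mp ht)))
    have hcast : ((Nat.primeCounting ⌊t⌋₊ - Nat.primeCounting ⌊y⌋₊ : ℕ) : ℝ)
        = (Nat.primeCounting ⌊t⌋₊ : ℝ) - Py := by
      rw [hPy, Nat.cast_sub hmono]
    have hπ : t / Real.log t + t / (2 * (Real.log t) ^ 2)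
        ≤ (Nat.primeCounting ⌊t⌋₊ : ℝ) := by
      have := (h t ht59).1
      linarith
    have hstep : G' t ≤ (t / Real.log t + t / (2 * (Real.log t) ^ 2)) * (2 / t ^ 3) := by
      have e : (t / Real.log t + t / (2 * (Real.log t) ^ 2)) * (2 / t ^ 3)
          = 2 / (t ^ 2 * Real.log t) + 1 / (t ^ 2 * (Real.log t) ^ 2) := by
        field_simp
      rw [e, hG']
      have hpos : (0:ℝ) ≤ 2 / (t ^ 2 * (Real.log t) ^ 3) := by positivity
      dsimp only
      linarith
    have hmain : G' t ≤ (Nat.primeCounting ⌊t⌋₊ : ℝ) * (2 / t ^ 3) :=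
      le_trans hstep (mul_le_mul_of_nonneg_right hπ (by positivity))
    rw [hH', hf]
    dsimp only
    rw [hcast]
    nlinarith [hmain]
  have hfint : IntegrableOn f (Ioi y) := integrableOn_count_mul y hy
  have hmono2 : ∫ t in Ioi y, H' t ≤ ∫ t in Ioi y, f t :=
    setIntegral_mono_on hH'int hfint measurableSet_Ioi hcmp
  rw [gt_iff_lt, sum_eq_integral y hy]
  -- final arithmetic
  have hPyub : Py < y / L + 3 * y / (2 * L ^ 2) := by
    have := (h y hy).2
    rw [← hLdef, ← hPy] at this
    linarith
  have hHval : 0 - H y = 2 * (y * L)⁻¹ - (y * L ^ 2)⁻¹ - Py / y ^ 2 := by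
    rw [hH, hG]
    dsimp only
    rw [← hLdef]
    field_simp
    ring
  have hLne : L ≠ 0 := ne_of_gt hL0
  have hyne : y ≠ 0 := ne_of_gt hy0
  have e2 : 2 * (y * L)⁻¹ - (y * L ^ 2)⁻¹ - Py / y ^ 2
      = (1 / (y * L)) * (1 - 5 / (2 * L))
        + (y / L + 3 * y / (2 * L ^ 2) - Py) / y ^ 2 := by
    field_simp
    ring
  have e3 : 0 < (y / L + 3 * y / (2 * L ^ 2) - Py) / y ^ 2 := by
    apply div_pos _ (by positivity)
    linarith
  calc (1 / (y * L)) * (1 - 5 / (2 * L))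
      < 2 * (y * L)⁻¹ - (y * L ^ 2)⁻¹ - Py / y ^ 2 := by rw [e2]; linarith
    _ = 0 - H y := hHval.symm
    _ = ∫ t in Ioi y, H' t := hintH'.symm
    _ ≤ ∫ t in Ioi y, f t := hmono2
end
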